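/- If R is a centrally essential semiperfect ring, then the left socle of R equals the right socle of R: Soc(_RR) = Soc(R_R). -/

import Mathlib

/-- A ring is *centrally essential* if, as a module over its center, it is an
essential extension of its center. -/
def IsCentrallyEssential (R : Type*) [Ring R] : Prop :=
  ∀ r : R, r ≠ 0 → ∃ c ∈ Subring.center R, c * r ≠ 0 ∧ c * r ∈ Subring.center R

/-- A ring is *semiperfect* if `R/J(R)` is semisimple (expressed via a
surjective ring homomorphism with kernel `J(R)` onto a semisimple ring) and
idempotents lift modulo `J(R)`. -/
def IsSemiperfectRing (R : Type*) [Ring R] : Prop :=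
  (∃ (S : Type) (_ : Ring S) (_ : IsSemisimpleRing S) (f : R →+* S),
      Function.Surjective f ∧ RingHom.ker f = Ideal.jacobson (⊥ : Ideal R)) ∧
    ∀ x : R, x * x - x ∈ Ideal.jacobson (⊥ : Ideal R) →
      ∃ e : R, e * e = e ∧ e - x ∈ Ideal.jacobson (⊥ : Ideal R)

/-- The left socle of a ring: the sum of all simple left submodules. -/
def leftSocle (R : Type*) [Ring R] : Submodule R R :=
  sSup {S : Submodule R R | IsSimpleModule R S}

/-- The right socle of a ring: the sum of all simple right submodules,
viewed as submodules over the opposite ring. -/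
def rightSocle (R : Type*) [Ring R] : Submodule Rᵐᵒᵖ R :=
  sSup {S : Submodule Rᵐᵒᵖ R | IsSimpleModule Rᵐᵒᵖ S}

/-- An atom of the submodule lattice is characterized by being nonzero and
generated by each of its nonzero elements. -/
lemma ce_atom_char {A : Type*} {M : Type*} [Ring A] [AddCommGroup M] [Module A M]
    {S : Submodule A M} :
    IsAtom S ↔ S ≠ ⊥ ∧ ∀ x ∈ S, x ≠ 0 → Submodule.span A {x} = S := by
  constructor
  · intro hS
    refine ⟨hS.1, fun x hx hx0 => ?_⟩
    have hle : Submodule.span A {x} ≤ S := by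
      rw [Submodule.span_le, Set.singleton_subset_iff]; exact hx
    rcases lt_or_eq_of_le hle with hlt | heq
    · exact absurd (Submodule.span_singleton_eq_bot.mp (hS.2 _ hlt)) hx0
    · exact heq
  · rintro ⟨h1, h2⟩
    refine ⟨h1, fun b hb => ?_⟩
    by_contra hb0
    obtain ⟨x, hxb, hx0⟩ := Submodule.exists_mem_ne_zero_of_ne_bot hb0
    have : Submodule.span A {x} ≤ b := by
      rw [Submodule.span_le, Set.singleton_subset_iff]; exact hxb
    rw [h2 x (le_of_lt hb hxb) hx0] at this
    exact absurd (le_antisymm (le_of_lt hb) this) (ne_of_lt hb)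

/-- For a central element, left and right spans coincide as sets. -/
lemma ce_span_central {R : Type*} [Ring R] (c : R) (hc : ∀ g : R, g * c = c * g) :
    (Submodule.span R {c} : Set R) = (Submodule.span Rᵐᵒᵖ {c} : Set R) := by
  ext x
  simp only [SetLike.mem_coe, Submodule.mem_span_singleton]
  constructor
  · rintro ⟨a, rfl⟩
    exact ⟨MulOpposite.op a, by simp [MulOpposite.smul_eq_mul_unop, hc a]⟩
  · rintro ⟨a, rfl⟩
    exact ⟨a.unop, by simp [MulOpposite.smul_eq_mul_unop, hc a.unop]⟩

/-- In a centrally essential ring, every simple left submodule of `R` is (as a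
set) a simple right submodule. -/
lemma ce_left_to_right {R : Type*} [Ring R] (hR : IsCentrallyEssential R)
    (S : Submodule R R) (hS : IsSimpleModule R S) :
    ∃ T : Submodule Rᵐᵒᵖ R, IsSimpleModule Rᵐᵒᵖ T ∧ (S : Set R) = (T : Set R) := by
  rw [isSimpleModule_iff_isAtom] at hS
  obtain ⟨hSbot, hgen⟩ := ce_atom_char.mp hS
  obtain ⟨m, hmS, hm0⟩ := Submodule.exists_mem_ne_zero_of_ne_bot hSbot
  obtain ⟨c, _, hcm0, hcmC⟩ := hR m hm0
  have hcmS : c * m ∈ S := S.smul_mem c hmS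
  have hspan : Submodule.span R {c * m} = S := hgen _ hcmS hcm0
  have hset : (S : Set R) = (Submodule.span Rᵐᵒᵖ {c * m} : Set R) := by
    rw [← hspan]; exact ce_span_central _ (Subring.mem_center_iff.mp hcmC)
  refine ⟨Submodule.span Rᵐᵒᵖ {c * m}, ?_, hset⟩
  rw [isSimpleModule_iff_isAtom]
  apply ce_atom_char.mpr
  constructor
  · intro h
    exact hcm0 (Submodule.span_singleton_eq_bot.mp h)
  · intro x hx hx0
    have hxS : x ∈ S := by
      rw [← SetLike.mem_coe, hset]; exact hx
    obtain ⟨d, hdC, hdx0, hdxC⟩ := hR x hx0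
    have hdxS : d * x ∈ S := S.smul_mem d hxS
    have h2 : Submodule.span R {d * x} = S := hgen _ hdxS hdx0
    apply le_antisymm
    · rw [Submodule.span_le, Set.singleton_subset_iff]; exact hx
    · intro y hy
      have hyS : y ∈ S := by rw [← SetLike.mem_coe, hset]; exact hy
      have hy2 : y ∈ Submodule.span R {d * x} := by rw [h2]; exact hyS
      have hy3 : y ∈ Submodule.span Rᵐᵒᵖ {d * x} := by
        rw [← SetLike.mem_coe, ← ce_span_central _ (Subring.mem_center_iff.mp hdxC)]
        exact hy2
      refine Submodule.span_le.mpr ?_ hy3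
      rw [Set.singleton_subset_iff]
      have : d * x = (MulOpposite.op d) • x := by
        simp [MulOpposite.smul_eq_mul_unop, Subring.mem_center_iff.mp hdC x]
      rw [this]
      exact Submodule.smul_mem _ _ (Submodule.mem_span_singleton_self x)

/-- In a centrally essential ring, every simple right submodule of `R` is (as a
set) a simple left submodule. -/
lemma ce_right_to_left {R : Type*} [Ring R] (hR : IsCentrallyEssential R)
    (T : Submodule Rᵐᵒᵖ R) (hT : IsSimpleModule Rᵐᵒᵖ T) :
    ∃ S : Submodule R R, IsSimpleModule R S ∧ (T : Set R) = (S : Set R) := by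
  rw [isSimpleModule_iff_isAtom] at hT
  obtain ⟨hTbot, hgen⟩ := ce_atom_char.mp hT
  obtain ⟨m, hmT, hm0⟩ := Submodule.exists_mem_ne_zero_of_ne_bot hTbot
  obtain ⟨c, hcC, hcm0, hcmC⟩ := hR m hm0
  have hcmT : c * m ∈ T := by
    have : c * m = (MulOpposite.op c) • m := by
      simp [MulOpposite.smul_eq_mul_unop, Subring.mem_center_iff.mp hcC m]
    rw [this]; exact T.smul_mem _ hmT
  have hspan : Submodule.span Rᵐᵒᵖ {c * m} = T := hgen _ hcmT hcm0
  have hset : (T : Set R) = (Submodule.span R {c * m} : Set R) := by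
    rw [← hspan]; exact (ce_span_central _ (Subring.mem_center_iff.mp hcmC)).symm
  refine ⟨Submodule.span R {c * m}, ?_, hset⟩
  rw [isSimpleModule_iff_isAtom]
  apply ce_atom_char.mpr
  constructor
  · intro h
    exact hcm0 (Submodule.span_singleton_eq_bot.mp h)
  · intro x hx hx0
    have hxT : x ∈ T := by
      rw [← SetLike.mem_coe, hset]; exact hx
    obtain ⟨d, hdC, hdx0, hdxC⟩ := hR x hx0
    have hdxT : d * x ∈ T := by
      have : d * x = (MulOpposite.op d) • x := by
        simp [MulOpposite.smul_eq_mul_unop, Subring.mem_center_iff.mp hdC x]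
      rw [this]; exact T.smul_mem _ hxT
    have h2 : Submodule.span Rᵐᵒᵖ {d * x} = T := hgen _ hdxT hdx0
    apply le_antisymm
    · rw [Submodule.span_le, Set.singleton_subset_iff]; exact hx
    · intro y hy
      have hyT : y ∈ T := by rw [← SetLike.mem_coe, hset]; exact hy
      have hy2 : y ∈ Submodule.span Rᵐᵒᵖ {d * x} := by rw [h2]; exact hyT
      have hy3 : y ∈ Submodule.span R {d * x} := by
        rw [← SetLike.mem_coe, ce_span_central _ (Subring.mem_center_iff.mp hdxC)]
        exact hy2
      refine Submodule.span_le.mpr ?_ hy3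
      rw [Set.singleton_subset_iff]
      have : d * x = d • x := rfl
      rw [this]
      exact Submodule.smul_mem _ _ (Submodule.mem_span_singleton_self x)

/-- In a centrally essential semiperfect ring, the left socle equals the
right socle. -/
theorem leftSocle_eq_rightSocle_of_centrallyEssential_semiperfect
    (R : Type*) [Ring R] (hR : IsCentrallyEssential R)
    (hsp : IsSemiperfectRing R) :
    (leftSocle R : Set R) = (rightSocle R : Set R) := by
  ext x
  simp only [SetLike.mem_coe]
  constructor
  · intro hx
    rw [leftSocle, sSup_eq_iSup'] at hx
    refine Submodule.iSup_induction (motive := fun y => y ∈ rightSocle R) _ hx ?_ ?_ ?_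
    · rintro ⟨S, hS⟩ y hy
      obtain ⟨T, hT, hset⟩ := ce_left_to_right hR S hS
      have hyT : y ∈ T := by rw [← SetLike.mem_coe, ← hset]; exact hy
      exact (le_sSup (show T ∈ _ from hT)) hyT
    · exact Submodule.zero_mem _
    · exact fun a b ha hb => Submodule.add_mem _ ha hb
  · intro hx
    rw [rightSocle, sSup_eq_iSup'] at hx
    refine Submodule.iSup_induction (motive := fun y => y ∈ leftSocle R) _ hx ?_ ?_ ?_
    · rintro ⟨T, hT⟩ y hy
      obtain ⟨S, hS, hset⟩ := ce_right_to_left hR T hT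
      have hyS : y ∈ S := by rw [← SetLike.mem_coe, ← hset]; exact hy
      exact (le_sSup (show S ∈ _ from hS)) hyS
    · exact Submodule.zero_mem _
    · exact fun a b ha hb => Submodule.add_mem _ ha hb
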